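/- In the abstract semi-direct product algebra C[Ω, μ] ⋉ H(W_aff, q), where H(W_aff, q) is the affine Hecke algebra with basis {T_w : w ∈ W_aff}, parameters q_s ∈ C× \ {1}, and C[Ω, μ] is a twisted group algebra with basis {E_t : t ∈ Ω}, every support-preserving C-algebra automorphism Ψ (i.e., Ψ(E_t·T_w) = c_{t,w}·E_t·T_w for scalars c_{t,w} ∈ C×) is of the form Ψ(E_t·T_w) = χ(t)·E_t·T_w for a unique group homomorphism χ: Ω → C×; in particular Ψ acts as the identity on H(W_aff, q). -/
import Mathlib


/-- Classification of support-preserving automorphisms of the semi-direct product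
algebra `C[Ω, μ] ⋉ H(W_aff, q)`. The algebra `A` has a basis `{E_t · T_w}` where
`{T_w}` satisfies the affine Hecke algebra relations (quadratic relations with
parameters `q_s ∈ C× \ {1}` for generators `s ∈ S`, and the length-additive
multiplication rule), `{E_t}` spans a twisted group algebra with 2-cocycle values
`μ(t₁,t₂) ∈ C×`, and `E_t · T_w = T_{t·w} · E_t` for a permutation action of `Ω`
preserving `S`. Every support-preserving `C`-algebra automorphism `Ψ` of `A` acts
as the identity on the Hecke algebra part, and there is a unique group homomorphism
`χ : Ω → C×` with `Ψ(E_t · T_w) = χ(t) · E_t · T_w`. -/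
theorem stmt_11 {C A : Type*} [Field C] [Ring A] [Algebra C A]
    {Ω W : Type*} [Group Ω] [Group W]
    (S : Set W) (hS1 : (1 : W) ∉ S)
    (hSgen : Subgroup.closure S = ⊤)
    (ℓ : W → ℕ) (hℓ1 : ℓ 1 = 0)
    (hdesc : ∀ w : W, w ≠ 1 → ∃ w' : W, ∃ s ∈ S, w = w' * s ∧ ℓ w = ℓ w' + 1)
    (q : W → C) (hq0 : ∀ s ∈ S, q s ≠ 0) (hq1 : ∀ s ∈ S, q s ≠ 1)
    (act : Ω → W → W) (hactS : ∀ t : Ω, ∀ s ∈ S, act t s ∈ S)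
    (μ : Ω → Ω → C) (hμ0 : ∀ t₁ t₂, μ t₁ t₂ ≠ 0)
    (E : Ω → A) (T : W → A)
    (hE1 : E 1 = 1) (hT1 : T 1 = 1)
    (hTs : ∀ s ∈ S, T s * T s = (q s - 1) • T s + q s • (1 : A))
    (hTmul : ∀ (w : W), ∀ s ∈ S, ℓ (w * s) = ℓ w + 1 → T (w * s) = T w * T s)
    (hEmul : ∀ t₁ t₂ : Ω, E t₁ * E t₂ = μ t₁ t₂ • E (t₁ * t₂))
    (hET : ∀ (t : Ω) (w : W), E t * T w = T (act t w) * E t)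
    (hli : LinearIndependent C (fun p : Ω × W => E p.1 * T p.2))
    (hspan : Submodule.span C (Set.range (fun p : Ω × W => E p.1 * T p.2)) = ⊤)
    (Ψ : A ≃ₐ[C] A)
    (hΨ : ∀ (t : Ω) (w : W), ∃ c : C, c ≠ 0 ∧ Ψ (E t * T w) = c • (E t * T w)) :
    (∀ w : W, Ψ (T w) = T w) ∧
    ∃! χ : Ω →* Cˣ, ∀ (t : Ω) (w : W), Ψ (E t * T w) = (χ t : C) • (E t * T w) := by
  classical
  choose c hc0 hcΨ using hΨ
  -- basis vectors are nonzero
  have hne : ∀ (t : Ω) (w : W), E t * T w ≠ 0 := fun t w => hli.ne_zero (t, w)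
  -- cancellation on a single basis vector
  have hcancel : ∀ (t : Ω) (w : W) (a b : C),
      a • (E t * T w) = b • (E t * T w) → a = b := by
    intro t w a b h
    by_contra hab
    have hz : (a - b) • (E t * T w) = 0 := by rw [sub_smul, h, sub_self]
    apply hne t w
    have := congrArg (fun x => (a - b)⁻¹ • x) hz
    simpa [inv_smul_smul₀ (sub_ne_zero.mpr hab)] using this
  -- cancellation on two distinct basis vectors
  have htwo : ∀ (p p' : Ω × W), p ≠ p' → ∀ a b : C,
      a • (E p.1 * T p.2) + b • (E p'.1 * T p'.2) = 0 → a = 0 ∧ b = 0 := by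
    intro p p' hpp a b h
    have h' := linearIndependent_iff'.mp hli {p, p'}
      (fun k => if k = p then a else b)
    have hsum : ∑ k ∈ ({p, p'} : Finset (Ω × W)),
        (if k = p then a else b) • (E k.1 * T k.2) = 0 := by
      rw [Finset.sum_pair hpp]
      simpa [hpp, Ne.symm hpp] using h
    constructor
    · have := h' hsum p (by simp)
      simpa using this
    · have := h' hsum p' (by simp)
      simpa [Ne.symm hpp] using this
  -- c 1 1 = 1
  have hc11 : c 1 1 = 1 := by
    have h1 : E (1 : Ω) * T (1 : W) = 1 := by rw [hE1, hT1, one_mul]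
    have := hcΨ 1 1
    rw [h1, map_one] at this
    refine hcancel 1 1 _ _ ?_
    rw [h1, one_smul]
    exact this.symm
  -- Ψ T w = c 1 w • T w
  have hΨT : ∀ w : W, Ψ (T w) = c 1 w • T w := by
    intro w
    have := hcΨ 1 w
    rwa [hE1, one_mul] at this
  -- c 1 s = 1 for s ∈ S
  have hcs : ∀ s ∈ S, c 1 s = 1 := by
    intro s hs
    set d := c 1 s with hd
    have hd0 : d ≠ 0 := hc0 1 s
    have key : Ψ (T s * T s) = (d * d) • ((q s - 1) • T s + q s • (1 : A)) := by
      rw [map_mul, hΨT s, smul_mul_smul_comm, hTs s hs]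
    have key2 : Ψ (T s * T s) = (q s - 1) • (d • T s) + q s • (1 : A) := by
      rw [hTs s hs, map_add, map_smul, map_smul, map_one, hΨT s]
    have heq : (d * d * (q s - 1) - (q s - 1) * d) • T s
        + (d * d * q s - q s) • (1 : A) = 0 := by
      have h := key.symm.trans key2
      rw [smul_add, smul_smul, smul_smul, smul_smul] at h
      rw [sub_smul, sub_smul, sub_add_sub_comm]
      exact sub_eq_zero.mpr h
    have hps : ((1, s) : Ω × W) ≠ (1, 1) := by
      simp only [ne_eq, Prod.mk.injEq, not_and]
      intro _
      exact fun h => hS1 (h ▸ hs)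
    have htwo' := htwo (1, s) (1, 1) hps
      (d * d * (q s - 1) - (q s - 1) * d) (d * d * q s - q s)
    simp only [hE1, hT1, one_mul, mul_one] at htwo'
    obtain ⟨h1, h2⟩ := htwo' (by simpa using heq)
    -- from h1 : d*d*(q s -1) = (q s -1)*d, and q s ≠ 1, d ≠ 0, get d = 1
    have hq' : q s - 1 ≠ 0 := sub_ne_zero.mpr (hq1 s hs)
    have : d * (q s - 1) * (d - 1) = 0 := by linear_combination h1
    rcases mul_eq_zero.mp this with h | h
    · rcases mul_eq_zero.mp h with h | h
      · exact absurd h hd0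
      · exact absurd h hq'
    · exact sub_eq_zero.mp h
  -- c 1 w = 1 for all w, by induction on length
  have hcw : ∀ w : W, c 1 w = 1 := by
    have : ∀ n : ℕ, ∀ w : W, ℓ w = n → c 1 w = 1 := by
      intro n
      induction n using Nat.strong_induction_on with
      | _ n ih =>
        intro w hw
        by_cases hw1 : w = 1
        · rw [hw1]; exact hc11
        · obtain ⟨w', s, hs, hws, hlen⟩ := hdesc w hw1
          have hTw : T w = T w' * T s := by
            rw [hws]; exact hTmul w' s hs (by rw [← hws, hlen])
          have hcw' : c 1 w' = 1 := by
            refine ih (ℓ w') ?_ w' rfl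
            omega
          have : Ψ (T w) = (c 1 w' * c 1 s) • T w := by
            rw [hTw, map_mul, hΨT, hΨT, smul_mul_smul_comm]
          rw [hΨT w] at this
          have := hcancel 1 w (c 1 w) (c 1 w' * c 1 s)
            (by rw [hE1, one_mul]; exact this)
          rw [this, hcw', hcs s hs, one_mul]
    exact fun w => this (ℓ w) w rfl
  have hΨTid : ∀ w : W, Ψ (T w) = T w := by
    intro w; rw [hΨT w, hcw w, one_smul]
  refine ⟨hΨTid, ?_⟩
  have hΨE : ∀ t : Ω, Ψ (E t) = c t 1 • E t := by
    intro t
    have := hcΨ t 1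
    rwa [hT1, mul_one] at this
  -- c t w = c t 1
  have hct : ∀ (t : Ω) (w : W), c t w = c t 1 := by
    intro t w
    have h1 : Ψ (E t * T w) = (c t 1 * c 1 w) • (E t * T w) := by
      rw [map_mul, hΨE t, hΨT w, smul_mul_smul_comm]
    rw [hcΨ t w] at h1
    have := hcancel t w _ _ h1
    rw [this, hcw w, mul_one]
  -- multiplicativity of t ↦ c t 1
  have hcmul : ∀ t₁ t₂ : Ω, c (t₁ * t₂) 1 = c t₁ 1 * c t₂ 1 := by
    intro t₁ t₂
    have h1 : Ψ (E t₁ * E t₂) = (c t₁ 1 * c t₂ 1 * μ t₁ t₂) • E (t₁ * t₂) := by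
      rw [map_mul, hΨE t₁, hΨE t₂, smul_mul_smul_comm, hEmul, smul_smul]
    have h2 : Ψ (E t₁ * E t₂) = (μ t₁ t₂ * c (t₁ * t₂) 1) • E (t₁ * t₂) := by
      rw [hEmul, map_smul, hΨE, smul_smul]
    have h3 : (c t₁ 1 * c t₂ 1 * μ t₁ t₂) • (E (t₁ * t₂) * T 1)
        = (μ t₁ t₂ * c (t₁ * t₂) 1) • (E (t₁ * t₂) * T 1) := by
      rw [hT1, mul_one, ← h1, ← h2]
    have := hcancel (t₁ * t₂) 1 _ _ h3
    have hμ := hμ0 t₁ t₂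
    have h4 : μ t₁ t₂ * c (t₁ * t₂) 1 = μ t₁ t₂ * (c t₁ 1 * c t₂ 1) := by
      linear_combination -this
    exact mul_left_cancel₀ hμ h4
  refine ⟨⟨⟨fun t => Units.mk0 (c t 1) (hc0 t 1), ?_⟩, ?_⟩, ?_, ?_⟩
  · exact Units.ext (by simpa using hc11)
  · intro t₁ t₂
    exact Units.ext (by simpa using hcmul t₁ t₂)
  · intro t w
    simp only [MonoidHom.coe_mk, OneHom.coe_mk, Units.val_mk0]
    rw [hcΨ t w, hct t w]
  · intro χ' hχ'
    ext t
    have h1 := hχ' t 1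
    rw [hcΨ t 1] at h1
    have := hcancel t 1 _ _ h1
    simpa using this.symm
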